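/- Let A = k[x] be the polynomial algebra with product x^m ∘ x^n := n·x^{m+n-1}. Then (A, ∘) is a Novikov algebra, and the map Δ: A → A⊗A defined by Δ(1) = Δ(x) = 0 and Δ(x^n) = −Σ_{i=1}^{n-1} i·x^{n-1-i}⊗x^{i-1} for n ≥ 2 satisfies the Novikov coalgebra axioms: (id⊗Δ)Δ − (τ⊗id)(id⊗Δ)Δ = (Δ⊗id)Δ − (τ⊗id)(Δ⊗id)Δ and (τ⊗id)(id⊗Δ)τΔ = (Δ⊗id)Δ. -/

import Mathlib

open scoped TensorProduct
open Polynomial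

def IsNovikov {A : Type*} [AddCommGroup A] (circ : A → A → A) : Prop :=
  (∀ a b c : A, circ (circ a b) c - circ a (circ b c) = circ (circ b a) c - circ b (circ a c)) ∧
  (∀ a b c : A, circ (circ a b) c = circ (circ a c) b)

def IsLieBr {A : Type*} [AddCommGroup A] (br : A → A → A) : Prop :=
  (∀ a b : A, br a b = - br b a) ∧
  (∀ a b c : A, br (br a b) c + br (br b c) a + br (br c a) b = 0)

def IsGD {A : Type*} [AddCommGroup A] (circ br : A → A → A) : Prop :=
  IsNovikov circ ∧ IsLieBr br ∧
  (∀ a b c : A, br (circ a b) c - br (circ a c) b + circ (br a b) c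
      - circ (br a c) b - circ a (br b c) = 0)

noncomputable def tau (k A : Type*) [Field k] [AddCommGroup A] [Module k A] :
    A ⊗[k] A →ₗ[k] A ⊗[k] A := (TensorProduct.comm k A A).toLinearMap

noncomputable def asr (k A : Type*) [Field k] [AddCommGroup A] [Module k A] :
    (A ⊗[k] A) ⊗[k] A →ₗ[k] A ⊗[k] (A ⊗[k] A) := (TensorProduct.assoc k A A A).toLinearMap

noncomputable def m12 (k A : Type*) [Field k] [AddCommGroup A] [Module k A] :
    A ⊗[k] (A ⊗[k] A) →ₗ[k] A ⊗[k] (A ⊗[k] A) :=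
  (asr k A) ∘ₗ (TensorProduct.map (tau k A) (LinearMap.id : A →ₗ[k] A)) ∘ₗ
    (TensorProduct.assoc k A A A).symm.toLinearMap

/-- The Novikov coalgebra axioms. -/
def IsNovikovCo {k A : Type*} [Field k] [AddCommGroup A] [Module k A]
    (Δ : A →ₗ[k] A ⊗[k] A) : Prop :=
  (∀ a : A,
    TensorProduct.map (LinearMap.id : A →ₗ[k] A) Δ (Δ a)
      - m12 k A (TensorProduct.map (LinearMap.id : A →ₗ[k] A) Δ (Δ a))
    = asr k A (TensorProduct.map Δ (LinearMap.id : A →ₗ[k] A) (Δ a))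
      - m12 k A (asr k A (TensorProduct.map Δ (LinearMap.id : A →ₗ[k] A) (Δ a)))) ∧
  (∀ a : A,
    m12 k A (TensorProduct.map (LinearMap.id : A →ₗ[k] A) Δ (tau k A (Δ a)))
    = asr k A (TensorProduct.map Δ (LinearMap.id : A →ₗ[k] A) (Δ a)))

/-- The Lie coalgebra axioms. -/
def IsLieCo {k A : Type*} [Field k] [AddCommGroup A] [Module k A]
    (δ : A →ₗ[k] A ⊗[k] A) : Prop :=
  (∀ a : A, δ a = - tau k A (δ a)) ∧
  (∀ a : A,
    TensorProduct.map (LinearMap.id : A →ₗ[k] A) δ (δ a)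
      - m12 k A (TensorProduct.map (LinearMap.id : A →ₗ[k] A) δ (δ a))
    = asr k A (TensorProduct.map δ (LinearMap.id : A →ₗ[k] A) (δ a)))

/-- The compatibility condition between the Novikov cooperation and the Lie cooperation
in a Gel'fand-Dorfman coalgebra. -/
def GDCoCompat {k A : Type*} [Field k] [AddCommGroup A] [Module k A]
    (Δ δ : A →ₗ[k] A ⊗[k] A) : Prop :=
  ∀ a : A,
    TensorProduct.map (LinearMap.id : A →ₗ[k] A) δ (Δ a)
      - m12 k A (TensorProduct.map (LinearMap.id : A →ₗ[k] A) Δ (δ a))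
      + m12 k A (TensorProduct.map (LinearMap.id : A →ₗ[k] A) δ (tau k A (Δ a)))
    = asr k A (TensorProduct.map Δ (LinearMap.id : A →ₗ[k] A) (δ a))
      + asr k A (TensorProduct.map δ (LinearMap.id : A →ₗ[k] A) (Δ a))

def IsGDCoalgebra {k A : Type*} [Field k] [AddCommGroup A] [Module k A]
    (Δ δ : A →ₗ[k] A ⊗[k] A) : Prop :=
  IsNovikovCo Δ ∧ IsLieCo δ ∧ GDCoCompat Δ δ
/-- The comultiplication `Δ(xⁿ) = -∑_{i=1}^{n-1} i · x^{n-1-i} ⊗ x^{i-1}` on `k[x]`. -/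
noncomputable def Delta17 (k : Type*) [Field k] :
    Polynomial k →ₗ[k] Polynomial k ⊗[k] Polynomial k :=
  (Polynomial.basisMonomials k).constr k fun n : ℕ =>
    - ∑ i ∈ Finset.Ioo 0 n, (i : k) • (((X : Polynomial k) ^ (n - 1 - i)) ⊗ₜ[k] ((X : Polynomial k) ^ (i - 1)))

section Helpers
variable (k : Type*) [Field k]

lemma delta_pow (n : ℕ) :
    Delta17 k (((X : Polynomial k)^n))
      = - ∑ i ∈ Finset.Ioo 0 n, (i : k) • (((X : Polynomial k) ^ (n - 1 - i)) ⊗ₜ[k] ((X : Polynomial k) ^ (i - 1))) := by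
  have h : ((X : Polynomial k)^n) = (Polynomial.basisMonomials k) n := by
    simp [Polynomial.coe_basisMonomials, X_pow_eq_monomial]
  rw [Delta17, h, Module.Basis.constr_basis]

variable {A : Type*} [AddCommGroup A] [Module k A]

lemma tau_tmul (x y : A) : tau k A (x ⊗ₜ[k] y) = y ⊗ₜ[k] x := rfl

lemma asr_tmul (x y z : A) : asr k A ((x ⊗ₜ[k] y) ⊗ₜ[k] z) = x ⊗ₜ[k] (y ⊗ₜ[k] z) := rfl

lemma m12_tmul (x y z : A) : m12 k A (x ⊗ₜ[k] (y ⊗ₜ[k] z)) = y ⊗ₜ[k] (x ⊗ₜ[k] z) := by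
  simp [m12, asr, tau]

end Helpers



section SmulHelpers
variable {k : Type*} [Field k]


lemma hns2 (c : k) (v : (Polynomial k ⊗[k] Polynomial k)) : (-c) • v = -(c • v) := neg_smul c v

lemma hsn2 (c : k) (v : (Polynomial k ⊗[k] Polynomial k)) : c • (-v) = -(c • v) := smul_neg c v

lemma hss2 (c d : k) (v : (Polynomial k ⊗[k] Polynomial k)) : c • d • v = (c*d) • v := smul_smul c d v

lemma hsub2 (c d : k) (v : (Polynomial k ⊗[k] Polynomial k)) : c • v - d • v = (c - d) • v := (sub_smul c d v).symm

lemma hnn2 (v : (Polynomial k ⊗[k] Polynomial k)) : -(-v) = v := neg_neg v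

lemma hsum2 {ι : Type*} (c : k) (s : Finset ι) (f : ι → (Polynomial k ⊗[k] Polynomial k)) :
    c • ∑ i ∈ s, f i = ∑ i ∈ s, c • f i := Finset.smul_sum

lemma hsneg2 {ι : Type*} (s : Finset ι) (f : ι → (Polynomial k ⊗[k] Polynomial k)) :
    (∑ i ∈ s, -(f i)) = -∑ i ∈ s, f i := Finset.sum_neg_distrib f

lemma hns3 (c : k) (v : (Polynomial k ⊗[k] (Polynomial k ⊗[k] Polynomial k))) : (-c) • v = -(c • v) := neg_smul c v

lemma hsn3 (c : k) (v : (Polynomial k ⊗[k] (Polynomial k ⊗[k] Polynomial k))) : c • (-v) = -(c • v) := smul_neg c v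

lemma hss3 (c d : k) (v : (Polynomial k ⊗[k] (Polynomial k ⊗[k] Polynomial k))) : c • d • v = (c*d) • v := smul_smul c d v

lemma hsub3 (c d : k) (v : (Polynomial k ⊗[k] (Polynomial k ⊗[k] Polynomial k))) : c • v - d • v = (c - d) • v := (sub_smul c d v).symm

lemma hnn3 (v : (Polynomial k ⊗[k] (Polynomial k ⊗[k] Polynomial k))) : -(-v) = v := neg_neg v

lemma hsum3 {ι : Type*} (c : k) (s : Finset ι) (f : ι → (Polynomial k ⊗[k] (Polynomial k ⊗[k] Polynomial k))) :
    c • ∑ i ∈ s, f i = ∑ i ∈ s, c • f i := Finset.smul_sum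

lemma hsneg3 {ι : Type*} (s : Finset ι) (f : ι → (Polynomial k ⊗[k] (Polynomial k ⊗[k] Polynomial k))) :
    (∑ i ∈ s, -(f i)) = -∑ i ∈ s, f i := by
  have hno : ∀ v : (Polynomial k ⊗[k] (Polynomial k ⊗[k] Polynomial k)), -v = (-1:k) • v := fun v => (neg_one_smul k v).symm
  simp only [hno]
  exact (hsum3 (-1) s f).symm

lemma hnsl (c : k) (v : ((Polynomial k ⊗[k] Polynomial k) ⊗[k] Polynomial k)) : (-c) • v = -(c • v) := neg_smul c v

lemma hsnl (c : k) (v : ((Polynomial k ⊗[k] Polynomial k) ⊗[k] Polynomial k)) : c • (-v) = -(c • v) := smul_neg c v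

lemma hssl (c d : k) (v : ((Polynomial k ⊗[k] Polynomial k) ⊗[k] Polynomial k)) : c • d • v = (c*d) • v := smul_smul c d v

lemma hsubl (c d : k) (v : ((Polynomial k ⊗[k] Polynomial k) ⊗[k] Polynomial k)) : c • v - d • v = (c - d) • v := (sub_smul c d v).symm

lemma hnnl (v : ((Polynomial k ⊗[k] Polynomial k) ⊗[k] Polynomial k)) : -(-v) = v := neg_neg v

lemma hsuml {ι : Type*} (c : k) (s : Finset ι) (f : ι → ((Polynomial k ⊗[k] Polynomial k) ⊗[k] Polynomial k)) :
    c • ∑ i ∈ s, f i = ∑ i ∈ s, c • f i := Finset.smul_sum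

lemma hsnegl {ι : Type*} (s : Finset ι) (f : ι → ((Polynomial k ⊗[k] Polynomial k) ⊗[k] Polynomial k)) :
    (∑ i ∈ s, -(f i)) = -∑ i ∈ s, f i := by
  have hno : ∀ v : ((Polynomial k ⊗[k] Polynomial k) ⊗[k] Polynomial k), -v = (-1:k) • v := fun v => (neg_one_smul k v).symm
  simp only [hno]
  exact (hsuml (-1) s f).symm

lemma htsm_pp (c : k) (x : Polynomial k) (y : Polynomial k) : x ⊗ₜ[k] (c • y) = c • (x ⊗ₜ[k] y) := TensorProduct.tmul_smul c x y

lemma hsmt_pp (c : k) (x : Polynomial k) (y : Polynomial k) : (c • x) ⊗ₜ[k] y = c • (x ⊗ₜ[k] y) := (TensorProduct.smul_tmul' c x y).symm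

lemma htn_pp (x : Polynomial k) (y : Polynomial k) : x ⊗ₜ[k] (-y) = -(x ⊗ₜ[k] y) := TensorProduct.tmul_neg x y

lemma hnt_pp (x : Polynomial k) (y : Polynomial k) : (-x) ⊗ₜ[k] y = -(x ⊗ₜ[k] y) := TensorProduct.neg_tmul x y

lemma hts_pp {ι : Type*} (s : Finset ι) (x : Polynomial k) (f : ι → Polynomial k) :
    x ⊗ₜ[k] (∑ i ∈ s, f i) = ∑ i ∈ s, x ⊗ₜ[k] f i := map_sum (TensorProduct.mk k _ _ x) f s

lemma hst_pp {ι : Type*} (s : Finset ι) (f : ι → Polynomial k) (y : Polynomial k) :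
    (∑ i ∈ s, f i) ⊗ₜ[k] y = ∑ i ∈ s, f i ⊗ₜ[k] y := TensorProduct.sum_tmul s f y

lemma htsm_pm (c : k) (x : Polynomial k) (y : (Polynomial k ⊗[k] Polynomial k)) : x ⊗ₜ[k] (c • y) = c • (x ⊗ₜ[k] y) := TensorProduct.tmul_smul c x y

lemma hsmt_pm (c : k) (x : Polynomial k) (y : (Polynomial k ⊗[k] Polynomial k)) : (c • x) ⊗ₜ[k] y = c • (x ⊗ₜ[k] y) := (TensorProduct.smul_tmul' c x y).symm

lemma htn_pm (x : Polynomial k) (y : (Polynomial k ⊗[k] Polynomial k)) : x ⊗ₜ[k] (-y) = -(x ⊗ₜ[k] y) := TensorProduct.tmul_neg x y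

lemma hnt_pm (x : Polynomial k) (y : (Polynomial k ⊗[k] Polynomial k)) : (-x) ⊗ₜ[k] y = -(x ⊗ₜ[k] y) := TensorProduct.neg_tmul x y

lemma hts_pm {ι : Type*} (s : Finset ι) (x : Polynomial k) (f : ι → (Polynomial k ⊗[k] Polynomial k)) :
    x ⊗ₜ[k] (∑ i ∈ s, f i) = ∑ i ∈ s, x ⊗ₜ[k] f i := map_sum (TensorProduct.mk k _ _ x) f s

lemma hst_pm {ι : Type*} (s : Finset ι) (f : ι → Polynomial k) (y : (Polynomial k ⊗[k] Polynomial k)) :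
    (∑ i ∈ s, f i) ⊗ₜ[k] y = ∑ i ∈ s, f i ⊗ₜ[k] y := TensorProduct.sum_tmul s f y

lemma htsm_mp (c : k) (x : (Polynomial k ⊗[k] Polynomial k)) (y : Polynomial k) : x ⊗ₜ[k] (c • y) = c • (x ⊗ₜ[k] y) := TensorProduct.tmul_smul c x y

lemma hsmt_mp (c : k) (x : (Polynomial k ⊗[k] Polynomial k)) (y : Polynomial k) : (c • x) ⊗ₜ[k] y = c • (x ⊗ₜ[k] y) := (TensorProduct.smul_tmul' c x y).symm

lemma htn_mp (x : (Polynomial k ⊗[k] Polynomial k)) (y : Polynomial k) : x ⊗ₜ[k] (-y) = -(x ⊗ₜ[k] y) := TensorProduct.tmul_neg x y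

lemma hnt_mp (x : (Polynomial k ⊗[k] Polynomial k)) (y : Polynomial k) : (-x) ⊗ₜ[k] y = -(x ⊗ₜ[k] y) := TensorProduct.neg_tmul x y

lemma hts_mp {ι : Type*} (s : Finset ι) (x : (Polynomial k ⊗[k] Polynomial k)) (f : ι → Polynomial k) :
    x ⊗ₜ[k] (∑ i ∈ s, f i) = ∑ i ∈ s, x ⊗ₜ[k] f i := map_sum (TensorProduct.mk k _ _ x) f s

lemma hst_mp {ι : Type*} (s : Finset ι) (f : ι → (Polynomial k ⊗[k] Polynomial k)) (y : Polynomial k) :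
    (∑ i ∈ s, f i) ⊗ₜ[k] y = ∑ i ∈ s, f i ⊗ₜ[k] y := TensorProduct.sum_tmul s f y

lemma hfn_a (f : (Polynomial k ⊗[k] Polynomial k) →ₗ[k] (Polynomial k ⊗[k] (Polynomial k ⊗[k] Polynomial k))) (v : (Polynomial k ⊗[k] Polynomial k)) : f (-v) = -f v := map_neg f v

lemma hfs_a {ι : Type*} (s : Finset ι) (f : (Polynomial k ⊗[k] Polynomial k) →ₗ[k] (Polynomial k ⊗[k] (Polynomial k ⊗[k] Polynomial k))) (g : ι → (Polynomial k ⊗[k] Polynomial k)) :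
    f (∑ i ∈ s, g i) = ∑ i ∈ s, f (g i) := map_sum f g s

lemma hfm_a (f : (Polynomial k ⊗[k] Polynomial k) →ₗ[k] (Polynomial k ⊗[k] (Polynomial k ⊗[k] Polynomial k))) (c : k) (v : (Polynomial k ⊗[k] Polynomial k)) : f (c • v) = c • f v := map_smul f c v

lemma hfn_b (f : (Polynomial k ⊗[k] Polynomial k) →ₗ[k] ((Polynomial k ⊗[k] Polynomial k) ⊗[k] Polynomial k)) (v : (Polynomial k ⊗[k] Polynomial k)) : f (-v) = -f v := map_neg f v

lemma hfs_b {ι : Type*} (s : Finset ι) (f : (Polynomial k ⊗[k] Polynomial k) →ₗ[k] ((Polynomial k ⊗[k] Polynomial k) ⊗[k] Polynomial k)) (g : ι → (Polynomial k ⊗[k] Polynomial k)) :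
    f (∑ i ∈ s, g i) = ∑ i ∈ s, f (g i) := map_sum f g s

lemma hfm_b (f : (Polynomial k ⊗[k] Polynomial k) →ₗ[k] ((Polynomial k ⊗[k] Polynomial k) ⊗[k] Polynomial k)) (c : k) (v : (Polynomial k ⊗[k] Polynomial k)) : f (c • v) = c • f v := map_smul f c v

lemma hfn_c (f : ((Polynomial k ⊗[k] Polynomial k) ⊗[k] Polynomial k) →ₗ[k] (Polynomial k ⊗[k] (Polynomial k ⊗[k] Polynomial k))) (v : ((Polynomial k ⊗[k] Polynomial k) ⊗[k] Polynomial k)) : f (-v) = -f v := map_neg f v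

lemma hfs_c {ι : Type*} (s : Finset ι) (f : ((Polynomial k ⊗[k] Polynomial k) ⊗[k] Polynomial k) →ₗ[k] (Polynomial k ⊗[k] (Polynomial k ⊗[k] Polynomial k))) (g : ι → ((Polynomial k ⊗[k] Polynomial k) ⊗[k] Polynomial k)) :
    f (∑ i ∈ s, g i) = ∑ i ∈ s, f (g i) := map_sum f g s

lemma hfm_c (f : ((Polynomial k ⊗[k] Polynomial k) ⊗[k] Polynomial k) →ₗ[k] (Polynomial k ⊗[k] (Polynomial k ⊗[k] Polynomial k))) (c : k) (v : ((Polynomial k ⊗[k] Polynomial k) ⊗[k] Polynomial k)) : f (c • v) = c • f v := map_smul f c v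

lemma hfn_d (f : (Polynomial k ⊗[k] (Polynomial k ⊗[k] Polynomial k)) →ₗ[k] (Polynomial k ⊗[k] (Polynomial k ⊗[k] Polynomial k))) (v : (Polynomial k ⊗[k] (Polynomial k ⊗[k] Polynomial k))) : f (-v) = -f v := map_neg f v

lemma hfs_d {ι : Type*} (s : Finset ι) (f : (Polynomial k ⊗[k] (Polynomial k ⊗[k] Polynomial k)) →ₗ[k] (Polynomial k ⊗[k] (Polynomial k ⊗[k] Polynomial k))) (g : ι → (Polynomial k ⊗[k] (Polynomial k ⊗[k] Polynomial k))) :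
    f (∑ i ∈ s, g i) = ∑ i ∈ s, f (g i) := map_sum f g s

lemma hfm_d (f : (Polynomial k ⊗[k] (Polynomial k ⊗[k] Polynomial k)) →ₗ[k] (Polynomial k ⊗[k] (Polynomial k ⊗[k] Polynomial k))) (c : k) (v : (Polynomial k ⊗[k] (Polynomial k ⊗[k] Polynomial k))) : f (c • v) = c • f v := map_smul f c v

lemma hfn_e (f : (Polynomial k ⊗[k] Polynomial k) →ₗ[k] (Polynomial k ⊗[k] Polynomial k)) (v : (Polynomial k ⊗[k] Polynomial k)) : f (-v) = -f v := map_neg f v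

lemma hfs_e {ι : Type*} (s : Finset ι) (f : (Polynomial k ⊗[k] Polynomial k) →ₗ[k] (Polynomial k ⊗[k] Polynomial k)) (g : ι → (Polynomial k ⊗[k] Polynomial k)) :
    f (∑ i ∈ s, g i) = ∑ i ∈ s, f (g i) := map_sum f g s

lemma hfm_e (f : (Polynomial k ⊗[k] Polynomial k) →ₗ[k] (Polynomial k ⊗[k] Polynomial k)) (c : k) (v : (Polynomial k ⊗[k] Polynomial k)) : f (c • v) = c • f v := map_smul f c v


end SmulHelpers

section Comp
variable (k : Type*) [Field k]

lemma T1 (n : ℕ) :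
    TensorProduct.map (LinearMap.id) (Delta17 k) ((Delta17 k) (((X : Polynomial k)^n))) =
    ∑ i ∈ Finset.Ioo 0 n, ∑ j ∈ Finset.Ioo 0 (i-1), ((i:k)*(j:k)) • (((X : Polynomial k)^(n-1-i)) ⊗ₜ[k] (((X : Polynomial k)^(i-1-1-j)) ⊗ₜ[k] ((X : Polynomial k)^(j-1)))) := by
  simp only [delta_pow, hns2, hsn2, hss2, hsub2, hnn2, hsum2, hsneg2, hns3, hsn3, hss3, hsub3, hnn3, hsum3, hsneg3, hnsl, hsnl, hssl, hsubl, hnnl, hsuml, hsnegl, htsm_pp, hsmt_pp, htn_pp, hnt_pp, hts_pp, hst_pp, htsm_pm, hsmt_pm, htn_pm, hnt_pm, hts_pm, hst_pm, htsm_mp, hsmt_mp, htn_mp, hnt_mp, hts_mp, hst_mp, hfn_a, hfs_a, hfm_a, hfn_b, hfs_b, hfm_b, hfn_c, hfs_c, hfm_c, hfn_d, hfs_d, hfm_d, hfn_e, hfs_e, hfm_e, TensorProduct.map_tmul, LinearMap.id_coe, id_eq, asr_tmul, m12_tmul, tau_tmul, neg_neg]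
lemma T2 (n : ℕ) :
    m12 k (Polynomial k) (TensorProduct.map (LinearMap.id) (Delta17 k) ((Delta17 k) (((X : Polynomial k)^n)))) =
    ∑ i ∈ Finset.Ioo 0 n, ∑ j ∈ Finset.Ioo 0 (i-1), ((i:k)*(j:k)) • (((X : Polynomial k)^(i-1-1-j)) ⊗ₜ[k] (((X : Polynomial k)^(n-1-i)) ⊗ₜ[k] ((X : Polynomial k)^(j-1)))) := by
  simp only [delta_pow, hns2, hsn2, hss2, hsub2, hnn2, hsum2, hsneg2, hns3, hsn3, hss3, hsub3, hnn3, hsum3, hsneg3, hnsl, hsnl, hssl, hsubl, hnnl, hsuml, hsnegl, htsm_pp, hsmt_pp, htn_pp, hnt_pp, hts_pp, hst_pp, htsm_pm, hsmt_pm, htn_pm, hnt_pm, hts_pm, hst_pm, htsm_mp, hsmt_mp, htn_mp, hnt_mp, hts_mp, hst_mp, hfn_a, hfs_a, hfm_a, hfn_b, hfs_b, hfm_b, hfn_c, hfs_c, hfm_c, hfn_d, hfs_d, hfm_d, hfn_e, hfs_e, hfm_e, TensorProduct.map_tmul, LinearMap.id_coe, id_eq, asr_tmul, m12_tmul, tau_tmul,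 neg_neg]
lemma T3 (n : ℕ) :
    asr k (Polynomial k) (TensorProduct.map (Delta17 k) (LinearMap.id) ((Delta17 k) (((X : Polynomial k)^n)))) =
    ∑ i ∈ Finset.Ioo 0 n, ∑ j ∈ Finset.Ioo 0 (n-1-i), ((i:k)*(j:k)) • (((X : Polynomial k)^(n-1-i-1-j)) ⊗ₜ[k] (((X : Polynomial k)^(j-1)) ⊗ₜ[k] ((X : Polynomial k)^(i-1)))) := by
  simp only [delta_pow, hns2, hsn2, hss2, hsub2, hnn2, hsum2, hsneg2, hns3, hsn3, hss3, hsub3, hnn3, hsum3, hsneg3, hnsl, hsnl, hssl, hsubl, hnnl, hsuml, hsnegl, htsm_pp, hsmt_pp, htn_pp, hnt_pp, hts_pp, hst_pp, htsm_pm, hsmt_pm, htn_pm, hnt_pm, hts_pm, hst_pm, htsm_mp, hsmt_mp, htn_mp, hnt_mp, hts_mp, hst_mp, hfn_a, hfs_a, hfm_a, hfn_b, hfs_b, hfm_b, hfn_c, hfs_c, hfm_c, hfn_d, hfs_d, hfm_d, hfn_e, hfs_e, hfm_e, TensorProduct.map_tmul, LinearMap.id_coe, id_eq, asr_tmul, m12_tmul,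 tau_tmul, neg_neg]
lemma T4 (n : ℕ) :
    m12 k (Polynomial k) (asr k (Polynomial k) (TensorProduct.map (Delta17 k) (LinearMap.id) ((Delta17 k) (((X : Polynomial k)^n))))) =
    ∑ i ∈ Finset.Ioo 0 n, ∑ j ∈ Finset.Ioo 0 (n-1-i), ((i:k)*(j:k)) • (((X : Polynomial k)^(j-1)) ⊗ₜ[k] (((X : Polynomial k)^(n-1-i-1-j)) ⊗ₜ[k] ((X : Polynomial k)^(i-1)))) := by
  simp only [delta_pow, hns2, hsn2, hss2, hsub2, hnn2, hsum2, hsneg2, hns3, hsn3, hss3, hsub3, hnn3, hsum3, hsneg3, hnsl, hsnl, hssl, hsubl, hnnl, hsuml, hsnegl, htsm_pp, hsmt_pp, htn_pp, hnt_pp, hts_pp, hst_pp, htsm_pm, hsmt_pm, htn_pm, hnt_pm, hts_pm, hst_pm, htsm_mp, hsmt_mp, htn_mp, hnt_mp, hts_mp, hst_mp, hfn_a, hfs_a, hfm_a, hfn_b, hfs_b, hfm_b, hfn_c, hfs_c, hfm_c, hfn_d, hfs_d, hfm_d, hfn_e, hfs_e, hfm_e, TensorProduct.map_tmul, LinearMap.id_coe,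 id_eq, asr_tmul, m12_tmul, tau_tmul, neg_neg]
lemma T5 (n : ℕ) :
    m12 k (Polynomial k) (TensorProduct.map (LinearMap.id) (Delta17 k) (tau k (Polynomial k) ((Delta17 k) (((X : Polynomial k)^n))))) =
    ∑ i ∈ Finset.Ioo 0 n, ∑ j ∈ Finset.Ioo 0 (n-1-i), ((i:k)*(j:k)) • (((X : Polynomial k)^(n-1-i-1-j)) ⊗ₜ[k] (((X : Polynomial k)^(i-1)) ⊗ₜ[k] ((X : Polynomial k)^(j-1)))) := by
  simp only [delta_pow, hns2, hsn2, hss2, hsub2, hnn2, hsum2, hsneg2, hns3, hsn3, hss3, hsub3, hnn3, hsum3, hsneg3, hnsl, hsnl, hssl, hsubl, hnnl, hsuml, hsnegl, htsm_pp, hsmt_pp, htn_pp, hnt_pp, hts_pp, hst_pp, htsm_pm, hsmt_pm, htn_pm, hnt_pm, hts_pm, hst_pm, htsm_mp, hsmt_mp, htn_mp, hnt_mp, hts_mp, hst_mp, hfn_a, hfs_a, hfm_a, hfn_b, hfs_b, hfm_b, hfn_c, hfs_c, hfm_c, hfn_d, hfs_d, hfm_d, hfn_e, hfs_e, hfm_e,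 TensorProduct.map_tmul, LinearMap.id_coe, id_eq, asr_tmul, m12_tmul, tau_tmul, neg_neg]

section MoreHelpers
variable {k : Type*} [Field k]

lemma hfm_f (f : Polynomial k →ₗ[k] (Polynomial k ⊗[k] Polynomial k)) (c : k) (v : Polynomial k) : f (c • v) = c • f v := map_smul f c v

lemma hfa_f (f : Polynomial k →ₗ[k] (Polynomial k ⊗[k] Polynomial k)) (u v : Polynomial k) : f (u + v) = f u + f v := map_add f u v

lemma hfa_a (f : (Polynomial k ⊗[k] Polynomial k) →ₗ[k] (Polynomial k ⊗[k] (Polynomial k ⊗[k] Polynomial k))) (u v : Polynomial k ⊗[k] Polynomial k) : f (u + v) = f u + f v := map_add f u v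

lemma hfa_b (f : (Polynomial k ⊗[k] Polynomial k) →ₗ[k] ((Polynomial k ⊗[k] Polynomial k) ⊗[k] Polynomial k)) (u v : Polynomial k ⊗[k] Polynomial k) : f (u + v) = f u + f v := map_add f u v

lemma hfa_c (f : ((Polynomial k ⊗[k] Polynomial k) ⊗[k] Polynomial k) →ₗ[k] (Polynomial k ⊗[k] (Polynomial k ⊗[k] Polynomial k))) (u v : (Polynomial k ⊗[k] Polynomial k) ⊗[k] Polynomial k) : f (u + v) = f u + f v := map_add f u v

lemma hfa_d (f : (Polynomial k ⊗[k] (Polynomial k ⊗[k] Polynomial k)) →ₗ[k] (Polynomial k ⊗[k] (Polynomial k ⊗[k] Polynomial k))) (u v : (Polynomial k ⊗[k] (Polynomial k ⊗[k] Polynomial k))) : f (u + v) = f u + f v := map_add f u v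

lemma hfa_e (f : (Polynomial k ⊗[k] Polynomial k) →ₗ[k] (Polynomial k ⊗[k] Polynomial k)) (u v : Polynomial k ⊗[k] Polynomial k) : f (u + v) = f u + f v := map_add f u v

lemma haddsub3 (a b c d : (Polynomial k ⊗[k] (Polynomial k ⊗[k] Polynomial k))) : (a + b) - (c + d) = (a - c) + (b - d) := add_sub_add_comm a b c d

lemma hsmsub3 (c : k) (u v : (Polynomial k ⊗[k] (Polynomial k ⊗[k] Polynomial k))) : c • u - c • v = c • (u - v) := (smul_sub c u v).symm

lemma hsd3 {ι : Type*} (s : Finset ι) (f g : ι → (Polynomial k ⊗[k] (Polynomial k ⊗[k] Polynomial k))) :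
    ∑ i ∈ s, (f i - g i) = (∑ i ∈ s, f i) - ∑ i ∈ s, g i := by
  classical
  induction s using Finset.induction with
  | empty =>
    simp only [Finset.sum_empty]
    exact (sub_zero (0 : Polynomial k ⊗[k] (Polynomial k ⊗[k] Polynomial k))).symm
  | insert _ _ ha ih =>
    rw [Finset.sum_insert ha, Finset.sum_insert ha, Finset.sum_insert ha, ih]
    exact (haddsub3 _ _ _ _).symm

lemma sub_swap' {M : Type*} [AddCommGroup M] {a b c d : M} (h : a - c = b - d) :
    a - b = c - d := by
  rw [← sub_eq_zero, show a - b - (c - d) = (a - c) - (b - d) from by abel, h, sub_self]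

end MoreHelpers

end Comp

section Key
variable (k : Type*) [Field k]

lemma T3' (n : ℕ) :
    asr k (Polynomial k) (TensorProduct.map (Delta17 k) (LinearMap.id) ((Delta17 k) (((X : Polynomial k)^n)))) =
    ∑ i ∈ Finset.Ioo 0 n, ∑ j ∈ Finset.Ioo 0 (i-1),
      ((j:k)*((i-1-j : ℕ):k)) • (((X : Polynomial k)^(n-1-i)) ⊗ₜ[k] (((X : Polynomial k)^(i-1-1-j)) ⊗ₜ[k] ((X : Polynomial k)^(j-1)))) := by
  rw [T3, Finset.sum_sigma', Finset.sum_sigma']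
  refine Finset.sum_nbij' (fun p => ⟨p.1+p.2+1, p.1⟩) (fun p => ⟨p.2, p.1-1-p.2⟩) ?_ ?_ ?_ ?_ ?_
  · intro p hp; simp only [Finset.mem_sigma, Finset.mem_Ioo] at hp ⊢; omega
  · intro p hp; simp only [Finset.mem_sigma, Finset.mem_Ioo] at hp ⊢; omega
  · intro p hp
    show (⟨p.1, p.1+p.2+1-1-p.1⟩ : (_ : ℕ) × ℕ) = p
    rw [show p.1+p.2+1-1-p.1 = p.2 from by omega]
  · intro p hp
    show (⟨p.2+(p.1-1-p.2)+1, p.2⟩ : (_ : ℕ) × ℕ) = p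
    simp only [Finset.mem_sigma, Finset.mem_Ioo] at hp
    rw [show p.2+(p.1-1-p.2)+1 = p.1 from by omega]
  · intro p hp
    simp only [Finset.mem_sigma, Finset.mem_Ioo] at hp
    rw [show p.1+p.2+1-1-p.1 = p.2 from by omega,
      show n-1-(p.1+p.2+1) = n-1-p.1-1-p.2 from by omega,
      show p.1+p.2+1-1-1-p.1 = p.2-1 from by omega]

lemma T4' (n : ℕ) :
    m12 k (Polynomial k) (asr k (Polynomial k) (TensorProduct.map (Delta17 k) (LinearMap.id) ((Delta17 k) (((X : Polynomial k)^n))))) =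
    ∑ i ∈ Finset.Ioo 0 n, ∑ j ∈ Finset.Ioo 0 (i-1),
      ((j:k)*((i-1-j : ℕ):k)) • (((X : Polynomial k)^(i-1-1-j)) ⊗ₜ[k] (((X : Polynomial k)^(n-1-i)) ⊗ₜ[k] ((X : Polynomial k)^(j-1)))) := by
  rw [T4, Finset.sum_sigma', Finset.sum_sigma']
  refine Finset.sum_nbij' (fun p => ⟨p.1+p.2+1, p.1⟩) (fun p => ⟨p.2, p.1-1-p.2⟩) ?_ ?_ ?_ ?_ ?_
  · intro p hp; simp only [Finset.mem_sigma, Finset.mem_Ioo] at hp ⊢; omega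
  · intro p hp; simp only [Finset.mem_sigma, Finset.mem_Ioo] at hp ⊢; omega
  · intro p hp
    show (⟨p.1, p.1+p.2+1-1-p.1⟩ : (_ : ℕ) × ℕ) = p
    rw [show p.1+p.2+1-1-p.1 = p.2 from by omega]
  · intro p hp
    show (⟨p.2+(p.1-1-p.2)+1, p.2⟩ : (_ : ℕ) × ℕ) = p
    simp only [Finset.mem_sigma, Finset.mem_Ioo] at hp
    rw [show p.2+(p.1-1-p.2)+1 = p.1 from by omega]
  · intro p hp
    simp only [Finset.mem_sigma, Finset.mem_Ioo] at hp
    rw [show p.1+p.2+1-1-p.1 = p.2 from by omega,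
      show n-1-(p.1+p.2+1) = n-1-p.1-1-p.2 from by omega,
      show p.1+p.2+1-1-1-p.1 = p.2-1 from by omega]

lemma key2 (n : ℕ) :
    m12 k (Polynomial k) (TensorProduct.map (LinearMap.id) (Delta17 k) (tau k (Polynomial k) ((Delta17 k) (((X : Polynomial k)^n))))) =
    asr k (Polynomial k) (TensorProduct.map (Delta17 k) (LinearMap.id) ((Delta17 k) (((X : Polynomial k)^n)))) := by
  rw [T5, T3, Finset.sum_sigma', Finset.sum_sigma']
  refine Finset.sum_nbij' (fun p => ⟨p.2, p.1⟩) (fun p => ⟨p.2, p.1⟩) ?_ ?_ ?_ ?_ ?_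
  · intro p hp; simp only [Finset.mem_sigma, Finset.mem_Ioo] at hp ⊢; omega
  · intro p hp; simp only [Finset.mem_sigma, Finset.mem_Ioo] at hp ⊢; omega
  · intro p hp; rfl
  · intro p hp; rfl
  · intro p hp
    simp only [Finset.mem_sigma, Finset.mem_Ioo] at hp
    rw [show n-1-p.2-1-p.1 = n-1-p.1-1-p.2 from by omega, mul_comm]

lemma key1 (n : ℕ) :
    TensorProduct.map (LinearMap.id) (Delta17 k) ((Delta17 k) (((X : Polynomial k)^n)))
      - m12 k (Polynomial k) (TensorProduct.map (LinearMap.id) (Delta17 k) ((Delta17 k) (((X : Polynomial k)^n))))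
    = asr k (Polynomial k) (TensorProduct.map (Delta17 k) (LinearMap.id) ((Delta17 k) (((X : Polynomial k)^n))))
      - m12 k (Polynomial k) (asr k (Polynomial k) (TensorProduct.map (Delta17 k) (LinearMap.id) ((Delta17 k) (((X : Polynomial k)^n))))) := by
  rw [T2, T4', T3', T1]
  refine sub_swap' ?_
  simp only [← hsd3, hsub3]
  rw [Finset.sum_sigma', Finset.sum_sigma']
  refine Finset.sum_nbij' (fun p => ⟨n+1+p.2-p.1, p.2⟩) (fun p => ⟨n+1+p.2-p.1, p.2⟩) ?_ ?_ ?_ ?_ ?_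
  · intro p hp; simp only [Finset.mem_sigma, Finset.mem_Ioo] at hp ⊢; omega
  · intro p hp; simp only [Finset.mem_sigma, Finset.mem_Ioo] at hp ⊢; omega
  · intro p hp
    show (⟨n+1+p.2-(n+1+p.2-p.1), p.2⟩ : (_ : ℕ) × ℕ) = p
    simp only [Finset.mem_sigma, Finset.mem_Ioo] at hp
    rw [show n+1+p.2-(n+1+p.2-p.1) = p.1 from by omega]
  · intro p hp
    show (⟨n+1+p.2-(n+1+p.2-p.1), p.2⟩ : (_ : ℕ) × ℕ) = p
    simp only [Finset.mem_sigma, Finset.mem_Ioo] at hp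
    rw [show n+1+p.2-(n+1+p.2-p.1) = p.1 from by omega]
  · intro p hp
    simp only [Finset.mem_sigma, Finset.mem_Ioo] at hp
    rw [show n-1-(n+1+p.2-p.1) = p.1-1-1-p.2 from by omega,
      show (n+1+p.2-p.1)-1-1-p.2 = n-1-p.1 from by omega,
      show (n+1+p.2-p.1)-1-p.2 = n-p.1 from by omega]
    congr 1
    rw [show ((n+1+p.2-p.1 : ℕ) : k) = (n:k)+1+(p.2:k)-(p.1:k) from by
        rw [Nat.cast_sub (by omega)]; push_cast; ring,
      show ((n-p.1 : ℕ) : k) = (n:k)-(p.1:k) from by rw [Nat.cast_sub (by omega)],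
      show ((p.1-1-p.2 : ℕ) : k) = (p.1:k)-1-(p.2:k) from by
        rw [show p.1-1-p.2 = p.1-(1+p.2) from by omega, Nat.cast_sub (by omega)]; push_cast; ring]
    ring

end Key

theorem stmt17 (k : Type*) [Field k] [CharZero k] :
    (∀ m n : ℕ, ((X : Polynomial k) ^ m) * Polynomial.derivative ((X : Polynomial k) ^ n)
        = (n : k) • (X : Polynomial k) ^ (m + n - 1)) ∧
    (Delta17 k 1 = 0 ∧ Delta17 k (X : Polynomial k) = 0 ∧
      ∀ n : ℕ, 2 ≤ n → Delta17 k ((X : Polynomial k) ^ n)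
        = - ∑ i ∈ Finset.Ioo 0 n,
            (i : k) • (((X : Polynomial k) ^ (n - 1 - i)) ⊗ₜ[k] ((X : Polynomial k) ^ (i - 1)))) ∧
    IsNovikov (fun a b : Polynomial k => a * Polynomial.derivative b) ∧
    IsNovikovCo (Delta17 k) := by
  refine ⟨?_, ⟨?_, ?_, ?_⟩, ⟨?_, ?_⟩, ?_, ?_⟩
  · intro m n
    rw [derivative_X_pow]
    rcases n with _ | n
    · simp
    · rw [smul_eq_C_mul]
      simp only [Nat.add_sub_cancel]
      rw [show m + (n+1) - 1 = m + n from by omega]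
      ring
  · rw [show (1 : Polynomial k) = (X : Polynomial k)^0 from (pow_zero X).symm, delta_pow k 0,
      show Finset.Ioo 0 0 = ∅ from rfl, Finset.sum_empty]
    exact neg_zero
  · rw [show (X : Polynomial k) = (X : Polynomial k)^1 from (pow_one X).symm, delta_pow k 1,
      show Finset.Ioo 0 1 = ∅ from rfl, Finset.sum_empty]
    exact neg_zero
  · intro n _
    exact delta_pow k n
  · intro a b c
    simp only [derivative_mul]
    ring
  · intro a b c
    simp only [derivative_mul]
    ring
  · intro a
    induction a using Polynomial.induction_on' with
    | add p q hp hq =>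
      simp only [map_add]
      rw [haddsub3, haddsub3, hp, hq]
    | monomial n c =>
      rw [← C_mul_X_pow_eq_monomial, ← smul_eq_C_mul]
      simp only [map_smul]
      rw [hsmsub3, hsmsub3, key1 k n]
  · intro a
    induction a using Polynomial.induction_on' with
    | add p q hp hq =>
      simp only [map_add]
      rw [hp, hq]
    | monomial n c =>
      rw [← C_mul_X_pow_eq_monomial, ← smul_eq_C_mul]
      simp only [map_smul]
      rw [key2 k n]
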